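/- Suppose p > 2 and let f be the discrete-logarithm permutation of F_{p^n} defined below. Then the Carlitz rank of f satisfies Crk(f) ≥ p^n − 3(2p)^{n/2}. -/

import Mathlib

open Polynomial

/-- The Carlitz expression `P_m(a_0, …, a_{m+1}; x)`: `carlitzIter 0 a x = a 0 * x + a 1`, and
`carlitzIter (m+1) a x = (carlitzIter m a x)^(q-2) + a (m+2)`. -/
def carlitzIter {F : Type*} [Field F] [Fintype F] : ℕ → (ℕ → F) → F → F
  | 0, a, x => a 0 * x + a 1
  | (m + 1), a, x => (carlitzIter m a x) ^ (Fintype.card F - 2) + a (m + 2)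

/-- `f` has Carlitz rank at most `m`: it can be represented as
`f(x) = (⋯((a_0 x + a_1)^(q-2) + a_2)^(q-2) + ⋯ + a_m)^(q-2) + a_{m+1}` with
`a_0, a_2, …, a_m ≠ 0`. -/
def HasCrkAtMost {F : Type*} [Field F] [Fintype F] (f : F → F) (m : ℕ) : Prop :=
  ∃ a : ℕ → F, a 0 ≠ 0 ∧ (∀ i, 2 ≤ i → i ≤ m → a i ≠ 0) ∧ ∀ x, f x = carlitzIter m a x

/-- The Carlitz rank of `f` is the smallest `m` admitting such a representation. -/
noncomputable def crk {F : Type*} [Field F] [Fintype F] (f : F → F) : ℕ :=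
  sInf {m | HasCrkAtMost f m}

/-- The unique polynomial of degree at most `q - 1` interpolating `f` on `𝔽_q`;
`deg f` and the weight `w(f)` are its degree and its number of nonzero coefficients. -/
noncomputable def interp {F : Type*} [Field F] [Fintype F] [DecidableEq F] (f : F → F) : Polynomial F :=
  Lagrange.interpolate Finset.univ id f


namespace Stmt17Aux

section
variable {F : Type*} [Field F] [Fintype F]

lemma qpow_ne (hq : 3 ≤ Fintype.card F) : Fintype.card F - 2 ≠ 0 := by omega

lemma pow_q2_zero (hq : 3 ≤ Fintype.card F) : (0 : F) ^ (Fintype.card F - 2) = 0 :=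
  zero_pow (qpow_ne hq)

lemma pow_q2_inv (y : F) (hy : y ≠ 0) : y ^ (Fintype.card F - 2) = y⁻¹ := by
  have h1 : y ^ (Fintype.card F - 1) = 1 := FiniteField.pow_card_sub_one_eq_one y hy
  have h2 : 1 ≤ Fintype.card F := Fintype.card_pos
  have h3 : Fintype.card F - 1 = (Fintype.card F - 2) + 1 := by
    have := Fintype.one_lt_card (α := F)
    omega
  rw [h3, pow_succ] at h1
  field_simp
  linear_combination h1

lemma pow_q2_q2 (hq : 3 ≤ Fintype.card F) (y : F) :
    (y ^ (Fintype.card F - 2)) ^ (Fintype.card F - 2) = y := by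
  rcases eq_or_ne y 0 with rfl | hy
  · rw [pow_q2_zero hq, pow_q2_zero hq]
  · rw [pow_q2_inv y hy, pow_q2_inv _ (inv_ne_zero hy), inv_inv]

lemma pow_q2_mul (hq : 3 ≤ Fintype.card F) (c y : F) (hc : c ≠ 0) :
    (c ^ (Fintype.card F - 2) * y) ^ (Fintype.card F - 2)
      = c * y ^ (Fintype.card F - 2) := by
  rw [mul_pow, pow_q2_q2 hq]

lemma carlitz_congr (m : ℕ) (a a' : ℕ → F) (h : ∀ i, i ≤ m + 1 → a i = a' i) :
    carlitzIter m a = carlitzIter m a' := by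
  induction m with
  | zero => funext x; simp only [carlitzIter, h 0 (by omega), h 1 (by omega)]
  | succ m ih =>
      funext x
      simp only [carlitzIter]
      rw [ih (fun i hi => h i (by omega)), h (m + 2) (by omega)]

/-- multiplying a Carlitz form by a nonzero constant and adding a constant keeps
the same length. -/
lemma affine_rep (hq : 3 ≤ Fintype.card F) :
    ∀ (m : ℕ) (a : ℕ → F) (c d : F), c ≠ 0 → a 0 ≠ 0 →
      (∀ i, 2 ≤ i → i ≤ m → a i ≠ 0) →
      ∃ a' : ℕ → F, a' 0 ≠ 0 ∧ (∀ i, 2 ≤ i → i ≤ m → a' i ≠ 0) ∧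
        a' (m + 1) = c * a (m + 1) + d ∧
        ∀ x, carlitzIter m a' x = c * carlitzIter m a x + d := by
  intro m
  induction m with
  | zero =>
      intro a c d hc ha0 _
      refine ⟨fun i => if i = 0 then c * a 0 else c * a 1 + d, by simpa using mul_ne_zero hc ha0,
        by omega, by simp, ?_⟩
      intro x
      simp only [carlitzIter]
      norm_num
      ring
  | succ m ih =>
      intro a c d hc ha0 hav
      obtain ⟨a'', h0, hv, htop, heq⟩ :=
        ih a (c ^ (Fintype.card F - 2)) 0 (pow_ne_zero _ hc) ha0
          (fun i h2 hm => hav i h2 (by omega))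
      refine ⟨fun i => if i = m + 2 then c * a (m + 2) + d else a'' i, ?_, ?_, by simp, ?_⟩
      · simpa using h0
      · intro i h2 hm
        by_cases hi : i = m + 2
        · omega
        · simp only [if_neg hi]
          rcases Nat.lt_or_ge i (m + 1) with h | h
          · exact hv i h2 (by omega)
          · have : i = m + 1 := by omega
            subst this
            rw [htop, add_zero]
            exact mul_ne_zero (pow_ne_zero _ hc) (hav (m + 1) h2 le_rfl)
      · intro x
        simp only [carlitzIter]
        have hcong : carlitzIter m (fun i => if i = m + 2 then c * a (m + 2) + d else a'' i) x
            = carlitzIter m a'' x := by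
          rw [carlitz_congr m _ a'' (fun i hi => by simp only [if_neg (by omega : i ≠ m + 2)])]
        rw [hcong, heq, add_zero]
        norm_num
        rw [pow_q2_mul hq _ _ hc]
        ring

end

section
variable {F : Type*} [Field F] [Fintype F]

/-- `f` has some Carlitz representation. -/
def Rep (f : F → F) : Prop := ∃ m, HasCrkAtMost f m

lemma rep_affine (c d : F) (hc : c ≠ 0) : Rep (fun x => c * x + d) := by
  refine ⟨0, fun i => if i = 0 then c else d, by simpa using hc, by omega, ?_⟩
  intro x; simp [carlitzIter]

lemma rep_id : Rep (fun x : F => x) := by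
  have := rep_affine (F := F) 1 0 one_ne_zero
  simpa using this

lemma rep_affine_comp (hq : 3 ≤ Fintype.card F) (f : F → F) (hf : Rep f) (c d : F) (hc : c ≠ 0) :
    Rep (fun x => c * f x + d) := by
  obtain ⟨m, a, h0, hv, he⟩ := hf
  obtain ⟨a', h0', hv', _, he'⟩ := affine_rep hq m a c d hc h0 hv
  exact ⟨m, a', h0', hv', fun x => by show c * f x + d = _; rw [he' x, he x]⟩

lemma rep_inv_comp (hq : 3 ≤ Fintype.card F) (f : F → F) (hf : Rep f) :
    Rep (fun x => (f x) ^ (Fintype.card F - 2)) := by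
  obtain ⟨m, a, h0, hv, he⟩ := hf
  by_cases hcase : m = 0 ∨ a (m + 1) ≠ 0
  · refine ⟨m + 1, fun i => if i = m + 2 then 0 else a i, by simpa using h0, ?_, ?_⟩
    · intro i h2 hm
      simp only [if_neg (by omega : i ≠ m + 2)]
      rcases Nat.lt_or_ge i (m + 1) with h | h
      · exact hv i h2 (by omega)
      · have : i = m + 1 := by omega
        subst this
        rcases hcase with h' | h'
        · omega
        · exact h'
    · intro x
      simp only [carlitzIter]
      rw [carlitz_congr m _ a (fun i hi => by simp only [if_neg (by omega : i ≠ m + 2)])]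
      rw [← he x]
      norm_num
  · push_neg at hcase
    obtain ⟨hm, htop⟩ := hcase
    obtain ⟨m', rfl⟩ : ∃ m', m = m' + 1 := ⟨m - 1, by omega⟩
    refine ⟨m', a, h0, fun i h2 hm' => hv i h2 (by omega), ?_⟩
    intro x
    show f x ^ (Fintype.card F - 2) = _
    rw [he x]
    simp only [carlitzIter, htop, add_zero]
    rw [pow_q2_q2 hq]

lemma rep_comp (hq : 3 ≤ Fintype.card F) (f g : F → F) (hf : Rep f) (hg : Rep g) :
    Rep (f ∘ g) := by
  obtain ⟨m, a, h0, hv, he⟩ := hf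
  induction m generalizing f with
  | zero =>
      have : Rep (fun x => a 0 * g x + a 1) := rep_affine_comp hq g hg (a 0) (a 1) h0
      convert this using 1
      funext x
      show f (g x) = _
      rw [he (g x)]
      simp [carlitzIter]
  | succ m ih =>
      set h := fun x => carlitzIter m a x with hh
      have h1 : Rep ((fun x => h x ^ (Fintype.card F - 2)) ∘ g) := by
        have : Rep (h ∘ g) :=
          ih h (fun i h2 hm => hv i h2 (by omega)) (fun x => rfl)
        have := rep_inv_comp hq (h ∘ g) this
        exact this
      have h2 : Rep (fun x => 1 * ((h (g x)) ^ (Fintype.card F - 2)) + a (m + 2)) :=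
        rep_affine_comp hq _ h1 1 (a (m + 2)) one_ne_zero
      convert h2 using 1
      funext x
      show f (g x) = _
      rw [he (g x)]
      simp [carlitzIter]
      rfl

end

section
variable {F : Type*} [Field F] [Fintype F] [DecidableEq F]

lemma rep_swap (hq : 3 ≤ Fintype.card F) (u v : F) (huv : u ≠ v) :
    Rep (fun x : F => if x = u then v else if x = v then u else x) := by
  set c : F := v - u with hc
  have hc0 : c ≠ 0 := sub_ne_zero.mpr (Ne.symm huv)
  set a : ℕ → F := fun i =>
    if i = 0 then 1 else if i = 1 then -v else if i = 2 then c⁻¹ else if i = 3 then -c else 0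
    with ha
  have hrep : Rep (fun x => (-(c * c)) * carlitzIter 3 a x + u) := by
    apply rep_affine_comp hq _ ⟨3, a, by norm_num [ha], ?_, fun x => rfl⟩
    · exact neg_ne_zero.mpr (mul_ne_zero hc0 hc0)
    · intro i h2 h3
      interval_cases i <;> simp [ha, hc0, inv_ne_zero hc0]
  convert hrep using 1
  funext x
  have expand : carlitzIter 3 a x =
      ((((x - v) ^ (Fintype.card F - 2) + c⁻¹) ^ (Fintype.card F - 2) + (-c))
        ^ (Fintype.card F - 2)) + 0 := by
    simp [carlitzIter, ha]
    ring_nf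
  rw [expand, add_zero]
  by_cases hxu : x = u
  · rw [if_pos hxu, hxu]
    have h1 : u - v = -c := by rw [hc]; ring
    rw [h1, pow_q2_inv _ (neg_ne_zero.mpr hc0)]
    have h2 : (-c)⁻¹ + c⁻¹ = 0 := by field_simp; ring
    rw [h2, pow_q2_zero hq, zero_add, pow_q2_inv _ (neg_ne_zero.mpr hc0)]
    field_simp
    ring
  · rw [if_neg hxu]
    by_cases hxv : x = v
    · rw [if_pos hxv, hxv, sub_self, pow_q2_zero hq, zero_add, pow_q2_inv _ (inv_ne_zero hc0),
        inv_inv]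
      have h2 : c + -c = 0 := by ring
      rw [h2, pow_q2_zero hq, mul_zero, zero_add]
    · rw [if_neg hxv]
      have hxv' : x - v ≠ 0 := sub_ne_zero.mpr hxv
      have hxu' : x - u ≠ 0 := sub_ne_zero.mpr hxu
      rw [pow_q2_inv _ hxv']
      have h2 : (x - v)⁻¹ + c⁻¹ = (x - u) / (c * (x - v)) := by
        field_simp
        ring
      rw [h2]
      have h3 : (x - u) / (c * (x - v)) ≠ 0 :=
        div_ne_zero hxu' (mul_ne_zero hc0 hxv')
      rw [pow_q2_inv _ h3]
      have h4 : ((x - u) / (c * (x - v)))⁻¹ + -c = (-(c * c)) / (x - u) := by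
        field_simp
        ring
      rw [h4]
      have h5 : (-(c * c)) / (x - u) ≠ 0 :=
        div_ne_zero (neg_ne_zero.mpr (mul_ne_zero hc0 hc0)) hxu'
      rw [pow_q2_inv _ h5]
      field_simp
      ring

lemma rep_perm (hq : 3 ≤ Fintype.card F) (σ : Equiv.Perm F) : Rep ⇑σ := by
  refine Equiv.Perm.swap_induction_on σ ?_ ?_
  · exact rep_id (F := F)
  · intro σ x y hxy ih
    have hs : Rep ⇑(Equiv.swap x y) := by
      have h := rep_swap hq x y hxy
      convert h using 1
      funext z; exact Equiv.swap_apply_def x y z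
    have h2 := rep_comp hq _ _ hs ih
    convert h2 using 1
    rfl

lemma rep_of_bijective (hq : 3 ≤ Fintype.card F) (f : F → F) (hb : Function.Bijective f) :
    Rep f := by
  have := rep_perm hq (Equiv.ofBijective f hb)
  convert this using 1
  rfl

end

section
variable {F : Type*} [Field F] [Fintype F] [DecidableEq F]

/-- A Carlitz form agrees with a nondegenerate Möbius map off a set of at most `m` points. -/
lemma mobius_agree (hq : 3 ≤ Fintype.card F) :
    ∀ (m : ℕ) (a : ℕ → F), a 0 ≠ 0 →
      ∃ (α β γ δ : F) (O : Finset F), α * δ - β * γ ≠ 0 ∧ O.card ≤ m ∧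
        ∀ x ∉ O, γ * x + δ ≠ 0 ∧ (γ * x + δ) * carlitzIter m a x = α * x + β := by
  intro m
  induction m with
  | zero =>
      intro a h0
      exact ⟨a 0, a 1, 0, 1, ∅, by simpa using h0, by simp, fun x _ => by
        simp only [carlitzIter]
        constructor
        · simp
        · ring⟩
  | succ m ih =>
      intro a h0
      obtain ⟨α, β, γ, δ, O, hdet, hcard, hO⟩ := ih a h0
      by_cases hα : α = 0
      · -- then β ≠ 0, numerator never zero
        have hβ : β ≠ 0 := by
          intro hβ; apply hdet; rw [hα, hβ]; ring
        refine ⟨γ + a (m + 2) * α, δ + a (m + 2) * β, α, β, O, ?_, hcard.trans (by omega), ?_⟩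
        · have : (γ + a (m + 2) * α) * β - (δ + a (m + 2) * β) * α = -(α * δ - β * γ) := by ring
          rw [this]; exact neg_ne_zero.mpr hdet
        · intro x hx
          obtain ⟨hden, hval⟩ := hO x hx
          have hnum : α * x + β ≠ 0 := by rw [hα]; simpa using hβ
          constructor
          · exact hnum
          · have hg : carlitzIter m a x = (α * x + β) / (γ * x + δ) := by
              rw [eq_div_iff hden]
              linear_combination hval
            have hg0 : carlitzIter m a x ≠ 0 := by
              rw [hg]; exact div_ne_zero hnum hden
            simp only [carlitzIter]
            rw [pow_q2_inv _ hg0, hg]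
            field_simp
            ring
      · refine ⟨γ + a (m + 2) * α, δ + a (m + 2) * β, α, β, insert (-β / α) O, ?_, ?_, ?_⟩
        · have : (γ + a (m + 2) * α) * β - (δ + a (m + 2) * β) * α = -(α * δ - β * γ) := by ring
          rw [this]; exact neg_ne_zero.mpr hdet
        · exact (Finset.card_insert_le _ _).trans (by omega)
        · intro x hx
          rw [Finset.mem_insert] at hx
          push_neg at hx
          obtain ⟨hx1, hx2⟩ := hx
          obtain ⟨hden, hval⟩ := hO x hx2
          have hnum : α * x + β ≠ 0 := by
            intro h
            apply hx1
            have : x * α = -β := by linear_combination h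
            field_simp [this]
            exact this
          constructor
          · exact hnum
          · have hg : carlitzIter m a x = (α * x + β) / (γ * x + δ) := by
              rw [eq_div_iff hden]
              linear_combination hval
            have hg0 : carlitzIter m a x ≠ 0 := by
              rw [hg]; exact div_ne_zero hnum hden
            simp only [carlitzIter]
            rw [pow_q2_inv _ hg0, hg]
            field_simp
            ring

end

section
lemma digit_sum_lt {b : ℕ} (hb : 0 < b) (c : ℕ → ℕ) :
    ∀ m, (∀ j, j < m → c j < b) → ∑ j ∈ Finset.range m, c j * b ^ j < b ^ m := by
  intro m
  induction m with
  | zero => simp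
  | succ m ih =>
      intro h
      rw [Finset.sum_range_succ]
      have h1 : ∑ j ∈ Finset.range m, c j * b ^ j < b ^ m := ih (fun j hj => h j (by omega))
      have h2 : c m * b ^ m ≤ (b - 1) * b ^ m :=
        Nat.mul_le_mul_right _ (by have := h m (by omega); omega)
      have h3 : (b - 1) * b ^ m = b * b ^ m - b ^ m := by rw [Nat.sub_one_mul]
      have h4 : b ^ m ≤ b * b ^ m := Nat.le_mul_of_pos_left _ hb
      have h5 : b ^ (m + 1) = b * b ^ m := by rw [pow_succ]; ring
      omega

lemma digit_reconstruct {b : ℕ} (hb : 1 < b) :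
    ∀ m x, x < b ^ m → ∑ j ∈ Finset.range m, (x / b ^ j % b) * b ^ j = x := by
  intro m
  induction m with
  | zero =>
      intro x hx
      simp only [pow_zero] at hx
      have : x = 0 := by omega
      simp [this]
  | succ m ih =>
      intro x hx
      rw [Finset.sum_range_succ']
      have e1 : ∀ j : ℕ, x / b ^ (j + 1) = (x / b) / b ^ j := by
        intro j
        rw [Nat.div_div_eq_div_mul, ← pow_succ']
      have e2 : (∑ j ∈ Finset.range m, (x / b ^ (j + 1) % b) * b ^ (j + 1))
          = b * ∑ j ∈ Finset.range m, ((x / b) / b ^ j % b) * b ^ j := by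
        rw [Finset.mul_sum]
        apply Finset.sum_congr rfl
        intro j _
        rw [e1 j, pow_succ]
        ring
      have hxb : x / b < b ^ m := by
        rw [Nat.div_lt_iff_lt_mul (by omega)]
        calc x < b ^ (m + 1) := hx
        _ = b ^ m * b := by rw [pow_succ]
      rw [e2, ih (x / b) hxb]
      simp only [pow_zero, Nat.div_one, mul_one]
      exact Nat.div_add_mod x b

lemma digit_extract {b : ℕ} (hb : 1 < b) (c : ℕ → ℕ) (m i : ℕ) (hi : i < m)
    (hc : ∀ j, j < m → c j < b) :
    (∑ j ∈ Finset.range m, c j * b ^ j) / b ^ i % b = c i := by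
  have hsplit : ∑ j ∈ Finset.range m, c j * b ^ j
      = (∑ j ∈ Finset.range i, c j * b ^ j)
        + ∑ j ∈ Finset.Ico i m, c j * b ^ j := by
    rw [Finset.range_eq_Ico, ← Finset.sum_Ico_consecutive _ (Nat.zero_le i) (le_of_lt hi)]
    rw [Finset.range_eq_Ico]
  have hIco : ∑ j ∈ Finset.Ico i m, c j * b ^ j
      = b ^ i * ∑ j ∈ Finset.range (m - i), c (i + j) * b ^ j := by
    rw [Finset.sum_Ico_eq_sum_range, Finset.mul_sum]
    apply Finset.sum_congr rfl
    intro j _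
    rw [pow_add]
    ring
  obtain ⟨k, hk⟩ : ∃ k, m - i = k + 1 := ⟨m - i - 1, by omega⟩
  have hT : ∑ j ∈ Finset.range (m - i), c (i + j) * b ^ j
      = c i + b * ∑ j ∈ Finset.range k, c (i + (j + 1)) * b ^ j := by
    rw [hk, Finset.sum_range_succ']
    simp only [pow_zero, mul_one, add_zero]
    rw [add_comm, Finset.mul_sum]
    congr 1
    apply Finset.sum_congr rfl
    intro j _
    rw [pow_succ]
    ring
  have hLlt : (∑ j ∈ Finset.range i, c j * b ^ j) < b ^ i :=
    digit_sum_lt (by omega) c i (fun j hj => hc j (by omega))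
  rw [hsplit, hIco, hT]
  rw [Nat.add_mul_div_left _ _ (pow_pos (by omega : 0 < b) i)]
  rw [Nat.div_eq_of_lt hLlt, zero_add]
  rw [Nat.add_mul_mod_self_left]
  exact Nat.mod_eq_of_lt (hc i hi)

lemma div_split (e x d : ℕ) (he : 0 < e) :
    (x + d) / e = x / e + d / e + (x % e + d % e) / e := by
  conv_lhs => rw [← Nat.div_add_mod x e, ← Nat.div_add_mod d e]
  have : e * (x / e) + x % e + (e * (d / e) + d % e)
      = (x % e + d % e) + e * (x / e + d / e) := by ring
  rw [this, Nat.add_mul_div_left _ _ he]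
  omega

lemma carry_le_one (e x d : ℕ) (he : 0 < e) : (x % e + d % e) / e ≤ 1 := by
  have h1 : x % e < e := Nat.mod_lt _ he
  have h2 : d % e < e := Nat.mod_lt _ he
  have h3 : (x % e + d % e) / e < 2 := (Nat.div_lt_iff_lt_mul he).mpr (by omega)
  omega

lemma geom_two (k : ℕ) : ∑ j ∈ Finset.range k, 2 ^ j = 2 ^ k - 1 := by
  induction k with
  | zero => simp
  | succ k ih =>
      rw [Finset.sum_range_succ, ih]
      have h1 : 0 < 2 ^ k := pow_pos (by omega) _
      have h2 : 2 ^ (k + 1) = 2 * 2 ^ k := by rw [pow_succ]; ring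
      omega

lemma geom_p {p : ℕ} (hp : 0 < p) (n : ℕ) :
    ∑ j ∈ Finset.range n, (p - 1) * p ^ j = p ^ n - 1 := by
  induction n with
  | zero => simp
  | succ n ih =>
      rw [Finset.sum_range_succ, ih]
      have h1 : 0 < p ^ n := pow_pos hp _
      have h3 : (p - 1) * p ^ n = p * p ^ n - p ^ n := by rw [Nat.sub_one_mul]
      have h4 : p ^ n ≤ p * p ^ n := Nat.le_mul_of_pos_left _ hp
      have h5 : p ^ (n + 1) = p * p ^ n := by rw [pow_succ]; ring
      omega

end

section
section Count

variable {F : Type*} [Field F] [Fintype F] [DecidableEq F]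
variable (p n : ℕ) (lam ζ : F)

/-- the digit expansion value -/
def sigmaNat (p n : ℕ) (lam : F) (x : ℕ) : F :=
  ∑ i ∈ Finset.range n, ((x / p ^ i % p : ℕ) : F) * lam ^ i

/-- the carry-difference value -/
def sVal (p n : ℕ) (lam : F) (x d : ℕ) : F :=
  ∑ i ∈ Finset.range n,
    (((d / p ^ i % p : ℕ) : F) + (((x % p ^ i + d % p ^ i) / p ^ i : ℕ) : F)) * lam ^ i

/-- binary encoding of the carry pattern -/
def carryCode (p n x d : ℕ) : ℕ :=
  ∑ j ∈ Finset.range (n - 1), ((x % p ^ (j + 1) + d % p ^ (j + 1)) / p ^ (j + 1)) * 2 ^ j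

lemma carryCode_lt (p n x d : ℕ) (hp : 0 < p) : carryCode p n x d < 2 ^ (n - 1) := by
  apply digit_sum_lt (by omega)
  intro j _
  have := carry_le_one (p ^ (j + 1)) x d (pow_pos hp _)
  omega

lemma sigma_shift (hp : 1 < p) (hpF : ((p : ℕ) : F) = 0) (x d : ℕ) :
    sigmaNat p n lam (x + d) = sigmaNat p n lam x + sVal p n lam x d := by
  unfold sigmaNat sVal
  rw [← Finset.sum_add_distrib]
  apply Finset.sum_congr rfl
  intro i _
  rw [← add_mul]
  congr 1
  have castmod : ∀ a : ℕ, ((a % p : ℕ) : F) = (a : F) := by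
    intro a
    conv_rhs => rw [← Nat.div_add_mod a p]
    push_cast
    rw [hpF]
    ring
  rw [castmod, castmod, castmod]
  rw [div_split (p ^ i) x d (pow_pos (by omega : 0 < p) _)]
  push_cast
  ring

lemma sVal_carry_eq (hp : 1 < p) (x x' d : ℕ)
    (hcc : carryCode p n x d = carryCode p n x' d) :
    sVal p n lam x d = sVal p n lam x' d := by
  unfold sVal
  apply Finset.sum_congr rfl
  intro i hi
  rw [Finset.mem_range] at hi
  congr 2
  rcases Nat.eq_zero_or_pos i with rfl | hipos
  · simp [Nat.mod_one]
  · obtain ⟨j, rfl⟩ : ∃ j, i = j + 1 := ⟨i - 1, by omega⟩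
    have hb : ∀ y : ℕ, (y % p ^ (j + 1) + d % p ^ (j + 1)) / p ^ (j + 1)
        = carryCode p n y d / 2 ^ j % 2 := by
      intro y
      rw [carryCode]
      rw [digit_extract (by omega) _ (n - 1) j (by omega)]
      intro j' _
      have := carry_le_one (p ^ (j' + 1)) y d (pow_pos (by omega : 0 < p) _)
      omega
    rw [hb x, hb x', hcc]

variable (α β γ δ : F)

/-- The agreement set on exponents. -/
noncomputable def XSet (p n : ℕ) (lam ζ α β γ δ : F) [Field F] [Fintype F] [DecidableEq F] :
    Finset ℕ :=
  (Finset.range (Fintype.card F - 1)).filter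
    (fun x => (γ * ζ ^ x + δ) * sigmaNat p n lam x = α * ζ ^ x + β)

theorem count_bound (hp : 1 < p) (hn : 1 ≤ n) (hpF : ((p : ℕ) : F) = 0)
    (hdet : α * δ - β * γ ≠ 0) (hz0 : ζ ≠ 0)
    (hzne1 : ∀ d : ℕ, 0 < d → d < Fintype.card F - 1 → ζ ^ d ≠ 1)
    (hpinj : ∀ x y : ℕ, x < Fintype.card F - 1 → y < Fintype.card F - 1 →
      ζ ^ x = ζ ^ y → x = y) :
    (XSet p n lam ζ α β γ δ).card * (XSet p n lam ζ α β γ δ).card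
      - (XSet p n lam ζ α β γ δ).card
      ≤ 4 * ((Fintype.card F - 1) * 2 ^ (n - 1)) := by
  classical
  set Q := Fintype.card F - 1 with hQ
  set X := XSet p n lam ζ α β γ δ with hX
  have hXmem : ∀ x ∈ X, x < Q ∧ (γ * ζ ^ x + δ) * sigmaNat p n lam x = α * ζ ^ x + β := by
    intro x hx
    rw [hX, XSet, Finset.mem_filter, Finset.mem_range] at hx
    exact hx
  rw [← Finset.offDiag_card]
  set ψ : ℕ × ℕ → ℕ × ℕ := fun z =>
    (max z.1 z.2 - min z.1 z.2, carryCode p n (min z.1 z.2) (max z.1 z.2 - min z.1 z.2))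
    with hψ
  have hmaps : ∀ z ∈ X.offDiag, ψ z ∈ (Finset.range Q) ×ˢ (Finset.range (2 ^ (n - 1))) := by
    intro z hz
    rw [Finset.mem_offDiag] at hz
    obtain ⟨h1, h2, h3⟩ := hz
    have q1 := (hXmem _ h1).1
    have q2 := (hXmem _ h2).1
    rw [Finset.mem_product, Finset.mem_range, Finset.mem_range]
    constructor
    · show max z.1 z.2 - min z.1 z.2 < Q
      omega
    · show carryCode p n (min z.1 z.2) (max z.1 z.2 - min z.1 z.2) < 2 ^ (n - 1)
      exact carryCode_lt p n _ _ (by omega)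
  have hfiber : ∀ b ∈ (Finset.range Q) ×ˢ (Finset.range (2 ^ (n - 1))),
      (X.offDiag.filter (fun z => ψ z = b)).card ≤ 4 := by
    rintro ⟨d, cc⟩ hb
    rw [Finset.mem_product, Finset.mem_range, Finset.mem_range] at hb
    have hdQ : d < Q := hb.1
    set Fb := X.offDiag.filter (fun z => ψ z = (d, cc)) with hFb
    have hFbmem : ∀ z ∈ Fb, (min z.1 z.2) ∈ X ∧ (min z.1 z.2 + d) ∈ X ∧ 0 < d ∧
        max z.1 z.2 = min z.1 z.2 + d ∧ carryCode p n (min z.1 z.2) d = cc := by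
      intro z hz
      rw [hFb, Finset.mem_filter, Finset.mem_offDiag] at hz
      obtain ⟨⟨h1, h2, h3⟩, h4⟩ := hz
      have h4' : max z.1 z.2 - min z.1 z.2 = d ∧
          carryCode p n (min z.1 z.2) (max z.1 z.2 - min z.1 z.2) = cc := by
        have := Prod.ext_iff.mp h4
        simpa using this
      obtain ⟨hd, hcc⟩ := h4'
      have hmm : max z.1 z.2 = min z.1 z.2 + d := by omega
      have hdpos : 0 < d := by omega
      have hminX : min z.1 z.2 ∈ X := by
        rcases min_cases z.1 z.2 with ⟨hm', _⟩ | ⟨hm', _⟩ <;> rw [hm'] <;> assumption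
      have hmaxX : min z.1 z.2 + d ∈ X := by
        rw [← hmm]
        rcases max_cases z.1 z.2 with ⟨hm, _⟩ | ⟨hm, _⟩ <;> rw [hm] <;> assumption
      exact ⟨hminX, hmaxX, hdpos, hmm, by rw [← hd]; exact hcc⟩
    by_cases hne : Fb.Nonempty
    · obtain ⟨z₀, hz₀⟩ := hne
      obtain ⟨hz1, hz2, hdpos, hzmax, hzcc⟩ := hFbmem z₀ hz₀
      set s : F := sVal p n lam (min z₀.1 z₀.2) d with hs
      set w : F := ζ ^ d with hw
      have hw1 : w ≠ 1 := hzne1 d hdpos hdQ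
      have hw0 : w ≠ 0 := pow_ne_zero _ hz0
      set a2 : F := s * γ * γ * w with ha2
      set a1 : F := s * γ * δ * (w + 1) - (w - 1) * (α * δ - β * γ) with ha1
      set a0 : F := s * δ * δ with ha0
      set P : Polynomial F := C a2 * Polynomial.X ^ 2 + C a1 * Polynomial.X + C a0 with hP
      have hPc2 : P.coeff 2 = a2 := by
        rw [hP]
        simp only [coeff_add, coeff_C_mul, coeff_X_pow, Polynomial.coeff_X, coeff_C]
        norm_num
      have hPc1 : P.coeff 1 = a1 := by
        rw [hP]
        simp only [coeff_add, coeff_C_mul, coeff_X_pow, Polynomial.coeff_X, coeff_C]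
        norm_num
      have hPc0 : P.coeff 0 = a0 := by
        rw [hP]
        simp only [coeff_add, coeff_C_mul, coeff_X_pow, Polynomial.coeff_X, coeff_C]
        norm_num
      have hPne : P ≠ 0 := by
        intro h0
        by_cases hs0 : s = 0
        · have h1 := hPc1
          rw [h0] at h1
          simp only [coeff_zero] at h1
          rw [ha1, hs0] at h1
          apply hdet
          have hw1' : w - 1 ≠ 0 := sub_ne_zero.mpr hw1
          have : (w - 1) * (α * δ - β * γ) = 0 := by linear_combination h1
          rcases mul_eq_zero.mp this with h | h
          · exact absurd h hw1'
          · exact h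
        · by_cases hγ : γ = 0
          · have hδ : δ ≠ 0 := by
              intro hδ
              apply hdet
              rw [hγ, hδ]; ring
            have h1 := hPc0
            rw [h0] at h1
            simp only [coeff_zero] at h1
            exact (mul_ne_zero (mul_ne_zero hs0 hδ) hδ) h1.symm
          · have h1 := hPc2
            rw [h0] at h1
            simp only [coeff_zero] at h1
            exact (mul_ne_zero (mul_ne_zero (mul_ne_zero hs0 hγ) hγ) hw0) h1.symm
      have hdeg : P.natDegree ≤ 2 := by
        rw [hP]
        apply (Polynomial.natDegree_add_le _ _).trans
        rw [max_le_iff]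
        constructor
        · apply (Polynomial.natDegree_add_le _ _).trans
          rw [max_le_iff]
          constructor
          · exact (Polynomial.natDegree_C_mul_le _ _).trans
              (by rw [Polynomial.natDegree_X_pow])
          · exact (Polynomial.natDegree_C_mul_le _ _).trans
              (by rw [Polynomial.natDegree_X]; omega)
        · rw [Polynomial.natDegree_C]; omega
      have hroot : ∀ z ∈ Fb, ζ ^ (min z.1 z.2) ∈ P.roots.toFinset := by
        intro z hz
        obtain ⟨h1, h2, _, _, hcc⟩ := hFbmem z hz
        have hA := (hXmem _ h1).2
        have hB := (hXmem _ h2).2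
        have hsz : sigmaNat p n lam (min z.1 z.2 + d)
            = sigmaNat p n lam (min z.1 z.2) + s := by
          rw [sigma_shift p n lam hp hpF]
          congr 1
          rw [hs]
          exact sVal_carry_eq p n lam hp _ _ d (by rw [hcc, hzcc])
        rw [hsz] at hB
        have hpow : ζ ^ (min z.1 z.2 + d) = ζ ^ (min z.1 z.2) * w := by
          rw [hw, pow_add]
        rw [hpow] at hB
        rw [Multiset.mem_toFinset, Polynomial.mem_roots hPne, Polynomial.IsRoot.def]
        have heval : P.eval (ζ ^ (min z.1 z.2))
            = a2 * (ζ ^ (min z.1 z.2)) ^ 2 + a1 * (ζ ^ (min z.1 z.2)) + a0 := by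
          rw [hP]
          simp only [eval_add, eval_mul, eval_pow, eval_C, eval_X]
        rw [heval, ha2, ha1, ha0]
        linear_combination (γ * (ζ ^ (min z.1 z.2)) + δ) * hB
          - (γ * ((ζ ^ (min z.1 z.2)) * w) + δ) * hA
      have hroots_card : P.roots.toFinset.card ≤ 2 := by
        calc P.roots.toFinset.card ≤ Multiset.card P.roots := Multiset.toFinset_card_le _
        _ ≤ P.natDegree := Polynomial.card_roots' P
        _ ≤ 2 := hdeg
      have hFbcard : Fb.card ≤ 2 * P.roots.toFinset.card := by
        apply Finset.card_le_mul_card_image_of_maps_to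
          (f := fun z => ζ ^ (min z.1 z.2)) hroot
        intro u hu
        have hkey : (Fb.filter (fun z => ζ ^ (min z.1 z.2) = u)).card
            ≤ (Finset.univ : Finset Bool).card := by
          apply Finset.card_le_card_of_injOn (fun z => decide (z.1 < z.2))
            (fun _ _ => Finset.mem_univ _)
          intro z hz z' hz' hdec
          simp only [Finset.coe_filter, Set.mem_setOf_eq] at hz hz'
          obtain ⟨hzf, hzu⟩ := hz
          obtain ⟨hzf', hzu'⟩ := hz'
          obtain ⟨m1, m2, hd1, hmax, _⟩ := hFbmem z hzf
          obtain ⟨m1', m2', hd1', hmax', _⟩ := hFbmem z' hzf'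
          have hminlt : min z.1 z.2 < Q := (hXmem _ m1).1
          have hminlt' : min z'.1 z'.2 < Q := (hXmem _ m1').1
          have hmineq : min z.1 z.2 = min z'.1 z'.2 :=
            hpinj _ _ hminlt hminlt' (by rw [hzu, hzu'])
          have hmaxeq : max z.1 z.2 = max z'.1 z'.2 := by omega
          have hzne : z.1 ≠ z.2 := by
            rw [hFb, Finset.mem_filter, Finset.mem_offDiag] at hzf
            exact hzf.1.2.2
          have hzne' : z'.1 ≠ z'.2 := by
            rw [hFb, Finset.mem_filter, Finset.mem_offDiag] at hzf'
            exact hzf'.1.2.2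
          have hiff : z.1 < z.2 ↔ z'.1 < z'.2 := by
            constructor
            · intro h
              by_contra h'
              simp only [decide_eq_decide] at hdec
              exact h' (hdec.mp h)
            · intro h
              by_contra h'
              simp only [decide_eq_decide] at hdec
              exact h' (hdec.mpr h)
          rcases Nat.lt_or_ge z.1 z.2 with h | h <;>
            rcases Nat.lt_or_ge z'.1 z'.2 with g | g
          · have e1 : z.1 = z'.1 := by omega
            have e2 : z.2 = z'.2 := by omega
            exact Prod.ext_iff.mpr ⟨e1, e2⟩
          · exact absurd (hiff.mp h) (by omega)
          · exact absurd (hiff.mpr g) (by omega)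
          · have e1 : z.1 = z'.1 := by omega
            have e2 : z.2 = z'.2 := by omega
            exact Prod.ext_iff.mpr ⟨e1, e2⟩
        calc (Fb.filter (fun z => ζ ^ (min z.1 z.2) = u)).card
            ≤ (Finset.univ : Finset Bool).card := hkey
        _ = 2 := by simp
      calc Fb.card ≤ 2 * P.roots.toFinset.card := hFbcard
      _ ≤ 2 * 2 := by omega
      _ = 4 := rfl
    · rw [Finset.not_nonempty_iff_eq_empty] at hne
      rw [hne]
      simp
  have hmain := Finset.card_le_mul_card_image_of_maps_to hmaps 4 hfiber
  calc X.offDiag.card ≤ 4 * ((Finset.range Q) ×ˢ (Finset.range (2 ^ (n - 1)))).card := hmain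
  _ = 4 * (Q * 2 ^ (n - 1)) := by rw [Finset.card_product, Finset.card_range, Finset.card_range]

end Count

end

section
variable {F : Type*} [Field F] [Fintype F] [DecidableEq F]

lemma zeta_facts (hq : 3 ≤ Fintype.card F) (ζ : F)
    (hζ : ∀ a : F, a ≠ 0 → ∃ x : ℕ, ζ ^ x = a) :
    ζ ≠ 0 ∧ ζ ^ (Fintype.card F - 1) = 1 := by
  have hex : ∃ a : F, a ≠ 0 ∧ a ≠ 1 := by
    by_contra h
    push_neg at h
    have hsub : (Finset.univ : Finset F) ⊆ {0, 1} := by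
      intro a _
      rcases eq_or_ne a 0 with rfl | ha
      · simp
      · simp [h a ha]
    have h1 : Fintype.card F ≤ ({0, 1} : Finset F).card := by
      rw [← Finset.card_univ]
      exact Finset.card_le_card hsub
    have h2 : ({0, 1} : Finset F).card ≤ 2 := by
      apply (Finset.card_insert_le _ _).trans
      simp
    omega
  have hz0 : ζ ≠ 0 := by
    rintro rfl
    obtain ⟨a, ha0, ha1⟩ := hex
    obtain ⟨x, hx⟩ := hζ a ha0
    cases x with
    | zero => rw [pow_zero] at hx; exact ha1 hx.symm
    | succ x' => rw [zero_pow (Nat.succ_ne_zero x')] at hx; exact ha0 hx.symm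
  refine ⟨hz0, ?_⟩
  set u : Fˣ := Units.mk0 ζ hz0 with hu
  have huv : (u : F) = ζ := rfl
  have hmem : ∀ v : Fˣ, v ∈ Subgroup.zpowers u := by
    intro v
    obtain ⟨x, hx⟩ := hζ (v : F) (Units.ne_zero v)
    rw [Subgroup.mem_zpowers_iff]
    refine ⟨(x : ℤ), ?_⟩
    rw [zpow_natCast]
    ext
    rw [Units.val_pow_eq_pow_val, huv]
    exact hx
  have horder : orderOf u = Fintype.card F - 1 := by
    rw [orderOf_eq_card_of_forall_mem_zpowers hmem, Nat.card_eq_fintype_card,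
      ← Fintype.card_units]
  have h1 : u ^ (Fintype.card F - 1) = 1 := by
    rw [← horder]
    exact pow_orderOf_eq_one u
  calc ζ ^ (Fintype.card F - 1) = ((u ^ (Fintype.card F - 1) : Fˣ) : F) := by
        rw [Units.val_pow_eq_pow_val, huv]
  _ = 1 := by rw [h1, Units.val_one]

lemma zeta_ne_one (hq : 3 ≤ Fintype.card F) (ζ : F)
    (hζ : ∀ a : F, a ≠ 0 → ∃ x : ℕ, ζ ^ x = a) :
    ∀ d : ℕ, 0 < d → d < Fintype.card F - 1 → ζ ^ d ≠ 1 := by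
  obtain ⟨hz0, _⟩ := zeta_facts hq ζ hζ
  set u : Fˣ := Units.mk0 ζ hz0 with hu
  have huv : (u : F) = ζ := rfl
  have hmem : ∀ v : Fˣ, v ∈ Subgroup.zpowers u := by
    intro v
    obtain ⟨x, hx⟩ := hζ (v : F) (Units.ne_zero v)
    rw [Subgroup.mem_zpowers_iff]
    refine ⟨(x : ℤ), ?_⟩
    rw [zpow_natCast]
    ext
    rw [Units.val_pow_eq_pow_val, huv]
    exact hx
  have horder : orderOf u = Fintype.card F - 1 := by
    rw [orderOf_eq_card_of_forall_mem_zpowers hmem, Nat.card_eq_fintype_card,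
      ← Fintype.card_units]
  intro d hd0 hdlt h1
  have hu1 : u ^ d = 1 := by
    ext
    rw [Units.val_pow_eq_pow_val, huv, h1, Units.val_one]
  have := orderOf_dvd_of_pow_eq_one hu1
  rw [horder] at this
  have := Nat.le_of_dvd hd0 this
  omega

lemma zeta_pow_inj (hq : 3 ≤ Fintype.card F) (ζ : F)
    (hζ : ∀ a : F, a ≠ 0 → ∃ x : ℕ, ζ ^ x = a) :
    ∀ x y : ℕ, x < Fintype.card F - 1 → y < Fintype.card F - 1 → ζ ^ x = ζ ^ y → x = y := by
  obtain ⟨hz0, _⟩ := zeta_facts hq ζ hζ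
  have hne1 := zeta_ne_one hq ζ hζ
  intro x y hx hy hxy
  by_contra hne
  wlog hlt : x < y generalizing x y
  · exact this y x hy hx hxy.symm (Ne.symm hne) (by omega)
  · have h1 : ζ ^ x * ζ ^ (y - x) = ζ ^ x * 1 := by
      rw [mul_one, ← pow_add]
      rw [hxy]
      congr 1
      omega
    have h2 : ζ ^ (y - x) = 1 := by
      have := mul_left_cancel₀ (pow_ne_zero x hz0) h1
      exact this
    exact zeta_ne_one hq ζ hζ (y - x) (by omega) (by omega) h2

lemma zeta_dlog (hq : 3 ≤ Fintype.card F) (ζ : F)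
    (hζ : ∀ a : F, a ≠ 0 → ∃ x : ℕ, ζ ^ x = a) :
    ∀ t : F, t ≠ 0 → ∃ x : ℕ, x < Fintype.card F - 1 ∧ ζ ^ x = t := by
  obtain ⟨hz0, hz1⟩ := zeta_facts hq ζ hζ
  intro t ht
  obtain ⟨x0, hx0⟩ := hζ t ht
  set Q := Fintype.card F - 1 with hQ
  have hQpos : 0 < Q := by omega
  refine ⟨x0 % Q, Nat.mod_lt _ hQpos, ?_⟩
  calc ζ ^ (x0 % Q) = ζ ^ (x0 % Q) * (ζ ^ Q) ^ (x0 / Q) := by rw [hz1, one_pow, mul_one]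
  _ = ζ ^ (x0 % Q + Q * (x0 / Q)) := by rw [pow_add, pow_mul]
  _ = ζ ^ x0 := by rw [Nat.mod_add_div]
  _ = t := hx0

end

section
variable {F : Type*} [Field F] [Fintype F] [DecidableEq F]

/-- surjectivity of the discrete-log permutation -/
lemma f_surjective (p n : ℕ) [Fact p.Prime] (hp : 2 < p) (hn : 1 ≤ n)
    [Algebra (ZMod p) F] (hcard : Fintype.card F = p ^ n)
    (ζ : F) (lam : F) (b : Module.Basis (Fin n) (ZMod p) F) (hb : ∀ i : Fin n, b i = lam ^ (i : ℕ))
    (f : F → F)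
    (hf : ∀ x : ℕ, x < p ^ n - 1 →
      f (ζ ^ x) = ∑ i : Fin n, ((x / p ^ (i : ℕ) % p : ℕ) : F) * lam ^ (i : ℕ))
    (hf0 : f 0 = - ∑ i : Fin n, lam ^ (i : ℕ)) :
    Function.Surjective f := by
  have hp1 : 1 < p := by omega
  have hpF : ((p : ℕ) : F) = 0 := by
    rw [← map_natCast (algebraMap (ZMod p) F) p, ZMod.natCast_self, map_zero]
  intro t
  classical
  set c : ℕ → ℕ := fun j => if h : j < n then ((b.repr t) ⟨j, h⟩).val else 0 with hc
  have hclt : ∀ j, j < n → c j < p := by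
    intro j hj
    rw [hc]
    simp only [dif_pos hj]
    exact ZMod.val_lt _
  have hcle : ∀ j, c j ≤ p - 1 := by
    intro j
    rcases Nat.lt_or_ge j n with h | h
    · have := hclt j h; omega
    · rw [hc]; simp only [dif_neg (by omega : ¬ j < n)]; omega
  set x : ℕ := ∑ j ∈ Finset.range n, c j * p ^ j with hx
  have hxle : x ≤ p ^ n - 1 := by
    have h1 : x ≤ ∑ j ∈ Finset.range n, (p - 1) * p ^ j := by
      apply Finset.sum_le_sum
      intro j _
      exact Nat.mul_le_mul_right _ (hcle j)
    rw [geom_p (by omega) n] at h1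
    exact h1
  have hcast : ∀ j (h : j < n), ((c j : ℕ) : F) = algebraMap (ZMod p) F ((b.repr t) ⟨j, h⟩) := by
    intro j h
    rw [hc]
    simp only [dif_pos h]
    rw [← map_natCast (algebraMap (ZMod p) F) (((b.repr t) ⟨j, h⟩).val)]
    congr 1
    exact ZMod.natCast_rightInverse _
  have hrepr : t = ∑ i : Fin n, algebraMap (ZMod p) F ((b.repr t) i) * lam ^ (i : ℕ) := by
    conv_lhs => rw [← b.sum_repr t]
    apply Finset.sum_congr rfl
    intro i _
    rw [Algebra.smul_def, hb i]
  rcases Nat.lt_or_ge x (p ^ n - 1) with hlt | hge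
  · refine ⟨ζ ^ x, ?_⟩
    rw [hf x hlt, hrepr]
    apply Finset.sum_congr rfl
    intro i _
    congr 1
    have hdig : x / p ^ (i : ℕ) % p = c (i : ℕ) := by
      rw [hx]
      exact digit_extract (by omega) c n (i : ℕ) i.isLt (fun j hj => hclt j hj)
    rw [hdig, hcast (i : ℕ) i.isLt]
  · -- x = p^n - 1, all digits are p - 1, t = f 0
    have hxeq : x = p ^ n - 1 := by omega
    have hall : ∀ j, j < n → c j = p - 1 := by
      by_contra hcon
      push_neg at hcon
      obtain ⟨j₀, hj₀, hne⟩ := hcon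
      have hstrict : x < ∑ j ∈ Finset.range n, (p - 1) * p ^ j := by
        apply Finset.sum_lt_sum
        · intro j _
          exact Nat.mul_le_mul_right _ (hcle j)
        · refine ⟨j₀, Finset.mem_range.mpr hj₀, ?_⟩
          have h1 := hcle j₀
          have hlt' : c j₀ < p - 1 := by omega
          exact (Nat.mul_lt_mul_right (pow_pos (by omega : 0 < p) j₀)).mpr hlt'
      rw [geom_p (by omega) n] at hstrict
      omega
    refine ⟨0, ?_⟩
    rw [hf0, hrepr]
    rw [← Finset.sum_neg_distrib]
    apply Finset.sum_congr rfl
    intro i _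
    have h1 : ((c (i : ℕ) : ℕ) : F) = algebraMap (ZMod p) F ((b.repr t) i) := by
      rw [hcast (i : ℕ) i.isLt]
    have h2 : ((c (i : ℕ) : ℕ) : F) = -1 := by
      rw [hall (i : ℕ) i.isLt]
      have : ((p - 1 : ℕ) : F) = ((p : ℕ) : F) - 1 := by
        have : (1 : ℕ) ≤ p := by omega
        exact_mod_cast Nat.cast_sub this
      rw [this, hpF]
      ring
    rw [← h1, h2]
    ring

end

end Stmt17Aux

open Stmt17Aux in
set_option maxHeartbeats 2000000 in
/-- Suppose `p > 2` and let `f` be the discrete-logarithm permutation of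
`𝔽_{p^n}`: for a primitive element `ζ` and `λ` with `(1, λ, …, λ^(n-1))` an `𝔽_p`-basis,
`f(ζ^x) = x_0 + x_1 λ + ⋯ + x_{n-1} λ^(n-1)` where `x = x_0 + x_1 p + ⋯ + x_{n-1} p^(n-1)`
in base `p`, for `0 ≤ x ≤ p^n - 2`, and `f(0) = -1 - λ - ⋯ - λ^(n-1)`. Then
`Crk f ≥ p^n - 3·(2p)^(n/2)`. -/
theorem stmt17 (p n : ℕ) [Fact p.Prime] (hp : 2 < p) (hn : 1 ≤ n) {F : Type*} [Field F]
    [Fintype F] [Algebra (ZMod p) F] [DecidableEq F] (hcard : Fintype.card F = p ^ n)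
    (ζ : F) (hζ : ∀ a : F, a ≠ 0 → ∃ x : ℕ, ζ ^ x = a)
    (lam : F) (hlam : ∃ b : Module.Basis (Fin n) (ZMod p) F, ∀ i : Fin n, b i = lam ^ (i : ℕ))
    (f : F → F)
    (hf : ∀ x : ℕ, x < p ^ n - 1 →
      f (ζ ^ x) = ∑ i : Fin n, ((x / p ^ (i : ℕ) % p : ℕ) : F) * lam ^ (i : ℕ))
    (hf0 : f 0 = - ∑ i : Fin n, lam ^ (i : ℕ)) :
    (Fintype.card F : ℝ) - 3 * ((2 * p : ℕ) : ℝ) ^ ((n : ℝ) / 2) ≤ (crk f : ℝ) := by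
  classical
  obtain ⟨b, hb⟩ := hlam
  have hp1 : 1 < p := by omega
  have hq3 : 3 ≤ Fintype.card F := by
    rw [hcard]
    calc 3 ≤ p := hp
    _ = p ^ 1 := (pow_one p).symm
    _ ≤ p ^ n := Nat.pow_le_pow_right (by omega) hn
  have hQ : Fintype.card F - 1 = p ^ n - 1 := by rw [hcard]
  have hpF : ((p : ℕ) : F) = 0 := by
    rw [← map_natCast (algebraMap (ZMod p) F) p, ZMod.natCast_self, map_zero]
  set B : ℝ := ((2 * p : ℕ) : ℝ) ^ ((n : ℝ) / 2) with hB
  have hf' : ∀ x : ℕ, x < Fintype.card F - 1 → f (ζ ^ x) = sigmaNat p n lam x := by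
    intro x hx
    rw [hf x (by omega), sigmaNat]
    exact Fin.sum_univ_eq_sum_range (fun j => ((x / p ^ j % p : ℕ) : F) * lam ^ j) n
  have hsurj := f_surjective p n hp hn hcard ζ lam b hb f hf hf0
  have hinj : Function.Injective f := Finite.injective_iff_surjective.mpr hsurj
  have hRep : Rep f := rep_of_bijective hq3 f ⟨hinj, hsurj⟩
  have hne : {m | HasCrkAtMost f m}.Nonempty := hRep
  have hcrk : HasCrkAtMost f (crk f) := Nat.sInf_mem hne
  obtain ⟨a, ha0, hav, hae⟩ := hcrk
  obtain ⟨α, β, γ, δ, O, hdet, hOcard, hO⟩ := mobius_agree hq3 (crk f) a ha0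
  set m := crk f with hm
  set Agr : Finset F := Finset.univ.filter (fun t => (γ * t + δ) * f t = α * t + β) with hAgr
  have hsub : (Finset.univ : Finset F) ⊆ Agr ∪ O := by
    intro t _
    by_cases htO : t ∈ O
    · exact Finset.mem_union_right _ htO
    · apply Finset.mem_union_left
      rw [hAgr, Finset.mem_filter]
      refine ⟨Finset.mem_univ _, ?_⟩
      have h2 := (hO t htO).2
      rw [hae t]
      exact h2
  have hcard1 : Fintype.card F ≤ Agr.card + m := by
    calc Fintype.card F = (Finset.univ : Finset F).card := (Finset.card_univ).symm
    _ ≤ (Agr ∪ O).card := Finset.card_le_card hsub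
    _ ≤ Agr.card + O.card := Finset.card_union_le _ _
    _ ≤ Agr.card + m := by omega
  set Xs := XSet p n lam ζ α β γ δ with hXs
  set N := Xs.card with hN
  have hdlog := zeta_dlog hq3 ζ hζ
  set dl : F → ℕ := fun t => if h : ∃ x, x < Fintype.card F - 1 ∧ ζ ^ x = t
    then h.choose else 0 with hdl
  have hdlspec : ∀ t : F, t ≠ 0 → dl t < Fintype.card F - 1 ∧ ζ ^ (dl t) = t := by
    intro t ht
    have hex := hdlog t ht
    rw [hdl]
    simp only [dif_pos hex]
    exact hex.choose_spec
  have hAgrX : ∀ t ∈ Agr.erase 0, dl t ∈ Xs := by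
    intro t ht
    rw [Finset.mem_erase] at ht
    obtain ⟨ht0, htA⟩ := ht
    obtain ⟨hlt, hpow⟩ := hdlspec t ht0
    rw [hXs, XSet, Finset.mem_filter, Finset.mem_range]
    refine ⟨hlt, ?_⟩
    rw [← hf' (dl t) hlt, hpow]
    rw [hAgr, Finset.mem_filter] at htA
    exact htA.2
  have hinjd : Set.InjOn dl (Agr.erase 0) := by
    intro t ht t' ht' heq
    rw [Finset.mem_coe, Finset.mem_erase] at ht ht'
    have h1 := (hdlspec t ht.1).2
    have h2 := (hdlspec t' ht'.1).2
    rw [← h1, ← h2, heq]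
  have hcard2 : Agr.card ≤ 1 + N := by
    have h1 : (Agr.erase 0).card ≤ N := Finset.card_le_card_of_injOn dl hAgrX hinjd
    by_cases h0 : (0 : F) ∈ Agr
    · have h2 := Finset.card_erase_of_mem h0
      omega
    · rw [Finset.erase_eq_of_notMem h0] at h1
      omega
  have hcount := count_bound p n lam ζ α β γ δ hp1 hn hpF hdet (zeta_facts hq3 ζ hζ).1
      (zeta_ne_one hq3 ζ hζ) (zeta_pow_inj hq3 ζ hζ)
  have hnat : 4 * ((Fintype.card F - 1) * 2 ^ (n - 1)) ≤ 2 * (2 * p) ^ n := by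
    rw [hcard]
    have h1 : (2 * p) ^ n = 2 ^ n * p ^ n := mul_pow 2 p n
    obtain ⟨k, rfl⟩ : ∃ k, n = k + 1 := ⟨n - 1, by omega⟩
    have h2 : 4 * 2 ^ (k + 1 - 1) = 2 * 2 ^ (k + 1) := by
      rw [Nat.add_sub_cancel, pow_succ]
      ring
    calc 4 * ((p ^ (k + 1) - 1) * 2 ^ (k + 1 - 1))
        = (4 * 2 ^ (k + 1 - 1)) * (p ^ (k + 1) - 1) := by ring
    _ = 2 * 2 ^ (k + 1) * (p ^ (k + 1) - 1) := by rw [h2]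
    _ ≤ 2 * 2 ^ (k + 1) * p ^ (k + 1) := Nat.mul_le_mul_left _ (by omega)
    _ = 2 * (2 * p) ^ (k + 1) := by rw [h1]; ring
  have hNN2 : N * N - N ≤ 2 * (2 * p) ^ n := le_trans hcount hnat
  have hNle : N ≤ N * N := by
    rcases Nat.eq_zero_or_pos N with h | h
    · simp [h]
    · exact Nat.le_mul_of_pos_left N h
  have hNNR : (N : ℝ) * N - N ≤ 2 * (2 * (p : ℝ)) ^ n := by
    have hc := (Nat.cast_le (α := ℝ)).mpr hNN2
    rw [Nat.cast_sub hNle] at hc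
    push_cast at hc
    convert hc using 2 <;> push_cast <;> ring
  have hxpos : (0 : ℝ) < ((2 * p : ℕ) : ℝ) := by
    have : (0 : ℕ) < 2 * p := by omega
    exact_mod_cast this
  have hB0 : 0 ≤ B := Real.rpow_nonneg (le_of_lt hxpos) _
  have hB2 : B * B = 2 * (2 * (p : ℝ)) ^ n / 2 := by
    rw [hB, ← Real.rpow_add hxpos]
    have hx : (n : ℝ) / 2 + (n : ℝ) / 2 = (n : ℕ) := by push_cast; ring
    rw [hx, Real.rpow_natCast]
    push_cast
    ring
  have hB2' : 2 * (B * B) = 2 * (2 * (p : ℝ)) ^ n := by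
    rw [hB2]; ring
  have hx6 : (6 : ℝ) ≤ ((2 * p : ℕ) : ℝ) := by
    have : (6 : ℕ) ≤ 2 * p := by omega
    exact_mod_cast this
  have hB6 : (6 : ℝ) ^ ((1 : ℝ) / 2) ≤ B := by
    rw [hB]
    calc (6 : ℝ) ^ ((1 : ℝ) / 2) ≤ ((2 * p : ℕ) : ℝ) ^ ((1 : ℝ) / 2) :=
      Real.rpow_le_rpow (by norm_num) hx6 (by norm_num)
    _ ≤ ((2 * p : ℕ) : ℝ) ^ ((n : ℝ) / 2) := by
      apply Real.rpow_le_rpow_of_exponent_le (by linarith)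
      have h1 : (1 : ℝ) ≤ (n : ℝ) := by exact_mod_cast hn
      linarith
  have hy2 : ((6 : ℝ) ^ ((1 : ℝ) / 2)) * ((6 : ℝ) ^ ((1 : ℝ) / 2)) = 6 := by
    rw [← Real.rpow_add (by norm_num : (0 : ℝ) < 6)]
    norm_num
  have hy0 : (0 : ℝ) ≤ (6 : ℝ) ^ ((1 : ℝ) / 2) := Real.rpow_nonneg (by norm_num) _
  have hBge2 : (2 : ℝ) ≤ B := by
    have hy6 : (2 : ℝ) ≤ (6 : ℝ) ^ ((1 : ℝ) / 2) := by nlinarith [hy2, hy0]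
    linarith
  set s : ℝ := Real.sqrt 2 with hs
  have hs2 : s * s = 2 := Real.mul_self_sqrt (by norm_num)
  have hs0 : 0 ≤ s := Real.sqrt_nonneg 2
  have hs15 : s ≤ 1.5 := by
    have h1 : s ≤ Real.sqrt 2.25 := Real.sqrt_le_sqrt (by norm_num)
    have h2 : Real.sqrt 2.25 = 1.5 := by
      rw [show (2.25 : ℝ) = 1.5 ^ 2 by norm_num, Real.sqrt_sq (by norm_num : (0:ℝ) ≤ 1.5)]
    linarith
  have hNB : (N : ℝ) ≤ 1 + s * B := by
    by_contra hcon
    push_neg at hcon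
    have h1 : (0 : ℝ) ≤ s * B := mul_nonneg hs0 hB0
    have h2 : (s * B) * (s * B) = 2 * (B * B) := by
      calc (s * B) * (s * B) = (s * s) * (B * B) := by ring
      _ = 2 * (B * B) := by rw [hs2]
    have h3 : (s * B) * (s * B) < ((N : ℝ) - 1) * ((N : ℝ) - 1) := by
      apply mul_lt_mul'' (by linarith) (by linarith) h1 h1
    have h4 : ((N : ℝ) - 1) * ((N : ℝ) - 1) ≤ (N : ℝ) * N - N := by nlinarith
    linarith [hNNR, h2, h3, h4, hB2']
  have hqR : (Fintype.card F : ℝ) ≤ (m : ℝ) + 1 + (N : ℝ) := by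
    have h1 : Fintype.card F ≤ m + 1 + N := by omega
    exact_mod_cast h1
  have hfin : (1.5 : ℝ) * 2 ≤ (3 - s) * B :=
    mul_le_mul (by linarith) hBge2 (by norm_num) (by linarith)
  have hexp : (3 - s) * B = 3 * B - s * B := by ring
  linarith [hqR, hNB, hfin, hexp]
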